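/- For each natural number n ≥ 0, ump(K_{2n+1}) = n; that is, for the complete graph on 2n+1 vertices there exists a colouring with the unique midset property using exactly n colours, and there is no colouring of K_{2n+1} with the unique midset property using fewer than n colours. -/

import Mathlib

namespace UmpAux

variable {m : ℕ} [NeZero m]

/-- circular distance colour of a difference -/
def cd (a : ZMod m) : ℕ := min a.val (-a).val

omit [NeZero m] in
lemma cd_neg (a : ZMod m) : cd (-a) = cd a := by
  unfold cd; rw [neg_neg, min_comm]

lemma cd_eq (a b : ZMod m) (h : cd a = cd b) : a = b ∨ a = -b := by
  unfold cd at h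
  rw [ZMod.neg_val, ZMod.neg_val] at h
  by_cases ha : a = 0
  · by_cases hb : b = 0
    · left; rw [ha, hb]
    · exfalso
      have hb1 : 0 < b.val := by
        rcases Nat.eq_zero_or_pos b.val with h0 | h0
        · exact absurd ((ZMod.val_eq_zero b).mp h0) hb
        · exact h0
      have hb2 : b.val < m := ZMod.val_lt b
      simp [ha, hb] at h
      omega
  · by_cases hb : b = 0
    · exfalso
      have ha1 : 0 < a.val := by
        rcases Nat.eq_zero_or_pos a.val with h0 | h0
        · exact absurd ((ZMod.val_eq_zero a).mp h0) ha
        · exact h0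
      have ha2 : a.val < m := ZMod.val_lt a
      simp [ha, hb] at h
      omega
    · simp [ha, hb] at h
      have ha1 : 0 < a.val := by
        rcases Nat.eq_zero_or_pos a.val with h0 | h0
        · exact absurd ((ZMod.val_eq_zero a).mp h0) ha
        · exact h0
      have hb1 : 0 < b.val := by
        rcases Nat.eq_zero_or_pos b.val with h0 | h0
        · exact absurd ((ZMod.val_eq_zero b).mp h0) hb
        · exact h0
      have ha2 : a.val < m := ZMod.val_lt a
      have hb2 : b.val < m := ZMod.val_lt b
      have : a.val = b.val ∨ a.val = m - b.val := by omega
      rcases this with h' | h'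
      · left; exact ZMod.val_injective _ h'
      · right
        apply ZMod.val_injective
        rw [ZMod.neg_val, if_neg hb]
        exact h'

end UmpAux

open UmpAux in
lemma ump_exists (n : ℕ) :
    ∃ (φ : ZMod (2*n+1) → ZMod (2*n+1) → ℕ),
      (∀ x y, φ x y = φ y x) ∧
      (∀ x y, x ≠ y → ∃! p, p ≠ x ∧ p ≠ y ∧ φ x p = φ y p) ∧
      {c : ℕ | ∃ x y, x ≠ y ∧ φ x y = c}.ncard = n := by
  have : NeZero (2*n+1) := ⟨by omega⟩
  refine ⟨fun x y => cd (x - y), fun x y => ?_, ?_, ?_⟩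
  · show cd (x - y) = cd (y - x)
    rw [← cd_neg (x - y), neg_sub]
  · -- UMP
    intro x y hxy
    have h2 : (2 : ZMod (2*n+1)) * (n + 1 : ℕ) = 1 := by
      have : ((2*n+1 : ℕ) : ZMod (2*n+1)) = 0 := ZMod.natCast_self _
      push_cast at this ⊢
      linear_combination this
    refine ⟨(n + 1 : ℕ) * (x + y), ⟨?_, ?_, ?_⟩, ?_⟩
    · intro hp
      apply hxy
      have := congrArg (fun t => (2 : ZMod (2*n+1)) * t) hp
      rw [← mul_assoc, h2, one_mul] at this
      -- this : x + y = 2 * x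
      have : y = x := by linear_combination this
      exact (hxy this.symm).elim
    · intro hp
      apply hxy
      have := congrArg (fun t => (2 : ZMod (2*n+1)) * t) hp
      rw [← mul_assoc, h2, one_mul] at this
      have : x = y := by linear_combination this
      exact this
    · have : x - (n + 1 : ℕ) * (x + y) = -(y - (n + 1 : ℕ) * (x + y)) := by
        have h2' := h2
        linear_combination (-(x+y)) * h2
      show cd (x - ((n+1:ℕ) : ZMod (2*n+1)) * (x+y)) = cd (y - ((n+1:ℕ) : ZMod (2*n+1)) * (x+y))
      rw [this, cd_neg]
    · rintro q ⟨hqx, hqy, hq⟩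
      rcases cd_eq _ _ hq with h' | h'
      · exfalso; apply hxy; linear_combination h'
      · -- x - q = -(y - q) : 2q = x + y
        have h2q : (2 : ZMod (2*n+1)) * q = x + y := by linear_combination -h'
        have := congrArg (fun t => ((n:ZMod (2*n+1)) + 1) * t) h2q
        rw [← mul_assoc] at this
        rw [mul_comm ((n:ZMod (2*n+1)) + 1) 2] at this
        push_cast at h2
        rw [h2, one_mul] at this
        push_cast
        exact this
  · -- ncard
    have hset : {c : ℕ | ∃ x y : ZMod (2*n+1), x ≠ y ∧ cd (x - y) = c} = Set.Icc 1 n := by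
      ext c
      simp only [Set.mem_setOf_eq, Set.mem_Icc]
      constructor
      · rintro ⟨x, y, hxy, rfl⟩
        have hne : x - y ≠ 0 := sub_ne_zero.mpr hxy
        set a := x - y
        have h1 : 0 < a.val := by
          rcases Nat.eq_zero_or_pos a.val with h0 | h0
          · exact absurd ((ZMod.val_eq_zero a).mp h0) hne
          · exact h0
        have h2 : a.val < 2*n+1 := ZMod.val_lt a
        unfold cd
        rw [ZMod.neg_val, if_neg hne]
        omega
      · rintro ⟨h1, h2⟩
        refine ⟨(c : ZMod (2*n+1)), 0, ?_, ?_⟩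
        · intro h
          have := ZMod.val_cast_of_lt (show c < 2*n+1 by omega)
          rw [h] at this
          simp [ZMod.val_zero] at this
          omega
        · rw [sub_zero]
          unfold cd
          have hvc : (c : ZMod (2*n+1)).val = c := ZMod.val_cast_of_lt (by omega)
          have hne : (c : ZMod (2*n+1)) ≠ 0 := by
            intro h; rw [h, ZMod.val_zero] at hvc; omega
          rw [ZMod.neg_val, if_neg hne, hvc]
          omega
    rw [hset]
    rw [show (Set.Icc 1 n : Set ℕ) = ↑(Finset.Icc 1 n) by simp,
      Set.ncard_coe_finset, Nat.card_Icc]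
    omega


lemma ump_lower (n : ℕ) (C : Type*) (φ : Fin (2*n+1) → Fin (2*n+1) → C)
    (hsymm : ∀ x y, φ x y = φ y x)
    (hump : ∀ x y, x ≠ y → ∃! p, p ≠ x ∧ p ≠ y ∧ φ x p = φ y p) :
    n ≤ {c : C | ∃ x y, x ≠ y ∧ φ x y = c}.ncard := by
  classical
  rcases Nat.eq_zero_or_pos n with hn | hn
  · simp [hn]
  set S := {c : C | ∃ x y : Fin (2*n+1), x ≠ y ∧ φ x y = c} with hSdef
  have hSfin : S.Finite := by
    apply Set.Finite.subset (Set.finite_range (fun p : Fin (2*n+1) × Fin (2*n+1) => φ p.1 p.2))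
    rintro c ⟨x, y, _, rfl⟩
    exact ⟨(x, y), rfl⟩
  set P : Finset (Fin (2*n+1) × Fin (2*n+1)) := Finset.univ.offDiag with hPdef
  have hPcard : P.card = (2*n+1) * (2*n) := by
    rw [hPdef, Finset.offDiag_card, Finset.card_univ, Fintype.card_fin]
    have h : (2*n+1)*(2*n+1) = (2*n+1)*(2*n) + (2*n+1) := by ring
    omega
  set fib : Fin (2*n+1) → Finset (Fin (2*n+1) × Fin (2*n+1)) :=
    fun x => P.filter (fun p => p.1 ≠ x ∧ p.2 ≠ x ∧ φ x p.1 = φ x p.2) with hfibdef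
  -- each pair has a unique midpoint, so the fibres partition P
  have hstep1 : ∑ x : Fin (2*n+1), (fib x).card = P.card := by
    have hinner : ∀ p ∈ P, (Finset.univ.filter
        (fun x : Fin (2*n+1) => p.1 ≠ x ∧ p.2 ≠ x ∧ φ x p.1 = φ x p.2)).card = 1 := by
      intro p hp
      have hne : p.1 ≠ p.2 := (Finset.mem_offDiag.mp hp).2.2
      obtain ⟨q, ⟨hq1, hq2, hq3⟩, huniq⟩ := hump p.1 p.2 hne
      rw [Finset.card_eq_one]
      refine ⟨q, ?_⟩
      ext x
      simp only [Finset.mem_filter, Finset.mem_univ, true_and, Finset.mem_singleton]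
      constructor
      · rintro ⟨h1, h2, h3⟩
        exact huniq x ⟨h1.symm, h2.symm, by rw [hsymm p.1 x, h3, hsymm x p.2]⟩
      · rintro rfl
        exact ⟨hq1.symm, hq2.symm, by rw [hsymm x p.1, hq3, hsymm p.2 x]⟩
    calc ∑ x : Fin (2*n+1), (fib x).card
        = ∑ x : Fin (2*n+1), ∑ p ∈ P, if p.1 ≠ x ∧ p.2 ≠ x ∧ φ x p.1 = φ x p.2 then 1 else 0 := by
          refine Finset.sum_congr rfl fun x _ => ?_
          rw [hfibdef]
          exact Finset.card_filter _ _
      _ = ∑ p ∈ P, ∑ x : Fin (2*n+1), if p.1 ≠ x ∧ p.2 ≠ x ∧ φ x p.1 = φ x p.2 then 1 else 0 :=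
          Finset.sum_comm
      _ = ∑ p ∈ P, 1 := by
          refine Finset.sum_congr rfl fun p hp => ?_
          rw [← Finset.card_filter]
          exact hinner p hp
      _ = P.card := by simp
  -- some vertex is the midpoint of at most 2n pairs
  have hstep2 : ∃ x : Fin (2*n+1), (fib x).card ≤ 2*n := by
    have htot : ∑ x : Fin (2*n+1), (fib x).card ≤ ∑ _x : Fin (2*n+1), 2*n := by
      rw [hstep1, hPcard, Finset.sum_const, Finset.card_univ, Fintype.card_fin, smul_eq_mul]
    obtain ⟨x, _, hx⟩ := Finset.exists_le_of_sum_le Finset.univ_nonempty htot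
    exact ⟨x, hx⟩
  obtain ⟨x, hx⟩ := hstep2
  set D : Finset (Fin (2*n+1)) := Finset.univ.erase x with hDdef
  have hDcard : D.card = 2*n := by
    rw [hDdef, Finset.card_erase_of_mem (Finset.mem_univ x), Finset.card_univ,
      Fintype.card_fin]
    omega
  set g : Fin (2*n+1) → C := φ x with hgdef
  set Tx : Finset C := D.image g with hTdef
  set d : C → ℕ := fun c => (D.filter (fun y => g y = c)).card with hddef
  have hsumd : ∑ c ∈ Tx, d c = 2*n := by
    rw [← hDcard]
    exact (Finset.card_eq_sum_card_fiberwise (fun y hy => Finset.mem_image_of_mem g hy)).symm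
  -- fib x decomposes by colour
  have hfibcard : (fib x).card = ∑ c ∈ Tx, (d c * d c - d c) := by
    have hmem : ∀ p ∈ fib x, g p.1 ∈ Tx := by
      intro p hp
      rw [hfibdef, Finset.mem_filter] at hp
      exact Finset.mem_image_of_mem g (Finset.mem_erase.mpr ⟨hp.2.1, Finset.mem_univ _⟩)
    rw [Finset.card_eq_sum_card_fiberwise hmem]
    refine Finset.sum_congr rfl fun c _ => ?_
    have : (fib x).filter (fun p => g p.1 = c) = (D.filter (fun y => g y = c)).offDiag := by
      ext p
      simp only [hfibdef, hPdef, hgdef, hDdef, Finset.mem_filter, Finset.mem_offDiag,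
        Finset.mem_erase, Finset.mem_univ, true_and, and_true]
      constructor
      · rintro ⟨⟨hne, h1, h2, h3⟩, h4⟩
        exact ⟨⟨h1, h4⟩, ⟨h2, by rw [← h3, h4]⟩, hne⟩
      · rintro ⟨⟨h1, h4⟩, ⟨h2, h5⟩, hne⟩
        exact ⟨⟨hne, h1, h2, by rw [h4, h5]⟩, h4⟩
    rw [this, Finset.offDiag_card, hddef]
  -- hence ∑ d² ≤ 4n
  have hsq : ∑ c ∈ Tx, d c * d c ≤ 4*n := by
    have h1 : ∑ c ∈ Tx, (d c * d c - d c) ≤ 2*n := by rw [← hfibcard]; exact hx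
    have h2 : ∑ c ∈ Tx, d c * d c = ∑ c ∈ Tx, ((d c * d c - d c) + d c) := by
      refine Finset.sum_congr rfl fun c _ => ?_
      have : d c ≤ d c * d c := by nlinarith
      omega
    rw [h2, Finset.sum_add_distrib, hsumd]
    omega
  -- Cauchy–Schwarz
  have hcs : (2*n) * (2*n) ≤ Tx.card * (4*n) := by
    have := Finset.sum_mul_sq_le_sq_mul_sq (R := ℕ) Tx (fun _ => 1) d
    simp only [one_mul, one_pow, Finset.sum_const, smul_eq_mul, mul_one, pow_two] at this
    rw [hsumd] at this
    calc (2*n) * (2*n) ≤ Tx.card * ∑ c ∈ Tx, d c * d c := this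
      _ ≤ Tx.card * (4*n) := Nat.mul_le_mul_left _ hsq
  have hcard : n ≤ Tx.card := by
    by_contra h
    push_neg at h
    nlinarith
  refine le_trans hcard ?_
  rw [Set.ncard_eq_toFinset_card _ hSfin]
  apply Finset.card_le_card
  intro c hc
  rw [hTdef] at hc
  obtain ⟨y, hy, rfl⟩ := Finset.mem_image.mp hc
  rw [Set.Finite.mem_toFinset]
  exact ⟨x, y, (Finset.mem_erase.mp hy).1.symm, rfl⟩

/-- Ito–Ohta–Ono: `ump(K_{2n+1}) = n`. There is a colouring of the complete graph on
`2n+1` vertices with the unique midset property using exactly `n` colours, and every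
colouring of `K_{2n+1}` with the unique midset property uses at least `n` colours. -/
theorem ump_of_odd_complete_graph (n : ℕ) :
    (∃ (C : Type) (φ : Fin (2 * n + 1) → Fin (2 * n + 1) → C),
        (∀ x y, φ x y = φ y x) ∧
        (∀ x y, x ≠ y → ∃! p, p ≠ x ∧ p ≠ y ∧ φ x p = φ y p) ∧
        {c : C | ∃ x y, x ≠ y ∧ φ x y = c}.ncard = n) ∧
    (∀ (C : Type*) (φ : Fin (2 * n + 1) → Fin (2 * n + 1) → C),
        (∀ x y, φ x y = φ y x) →
        (∀ x y, x ≠ y → ∃! p, p ≠ x ∧ p ≠ y ∧ φ x p = φ y p) →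
        n ≤ {c : C | ∃ x y, x ≠ y ∧ φ x y = c}.ncard) := by
  constructor
  · obtain ⟨φ, h1, h2, h3⟩ := ump_exists n
    exact ⟨ℕ, φ, h1, h2, h3⟩
  · intro C φ h1 h2
    exact ump_lower n C φ h1 h2
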